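/- arXiv:2408.00442 — 2 statements merged into one kernel-verified Lean document; each statement's English description precedes it below -/
import Mathlib

section
/- Let q be a positive even integer and k = 2q − 1. Suppose W is a real (2q) × (2k) matrix with entries in {0,1} satisfying: (R1) W_{1,j} = 1 and W_{1,j+k} = 0 for all 1 ≤ j ≤ k; (R6) each row i with 2 ≤ i ≤ 2q has exactly q − 1 entries equal to 1 among its first k columns; (R4) W_{i,j+k} = 1 − W_{i,j} for all 2 ≤ i ≤ 2q and 1 ≤ j ≤ k; and (R5') for any two distinct rows i, l with 2 ≤ i, l ≤ 2q, the number of columns j ∈ {1,…,k} with W_{i,j} = W_{l,j} = 1 equals q/2 − 1. Then W has full rank 2q over ℚ. -/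
open Finset

lemma sum_eq_card_aux {n : ℕ} (f : Fin n → ℚ) (hf : ∀ j, f j = 0 ∨ f j = 1) :
    ∑ j, f j = (Nat.card {j : Fin n // f j = 1} : ℚ) := by
  classical
  rw [Nat.card_eq_fintype_card, Fintype.card_subtype]
  rw [← Finset.sum_filter_add_sum_filter_not Finset.univ (fun j => f j = 1) f]
  have h2 : ∑ j ∈ Finset.univ.filter (fun j => ¬ f j = 1), f j = 0 :=
    Finset.sum_eq_zero fun j hj => by
      rcases hf j with h | h
      · exact h
      · exact absurd h (Finset.mem_filter.mp hj).2
  rw [h2, add_zero, Finset.sum_congr rfl (fun j hj => (Finset.mem_filter.mp hj).2)]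
  simp

theorem stmt_6 (q : ℕ) (hq : 0 < q) (hqe : Even q) (k : ℕ) (hk : k = 2 * q - 1)
    (W : Matrix (Fin (2 * q)) (Fin k ⊕ Fin k) ℚ)
    (h01 : ∀ i j, W i j = 0 ∨ W i j = 1)
    (hR1 : ∀ j : Fin k, W ⟨0, by omega⟩ (Sum.inl j) = 1 ∧ W ⟨0, by omega⟩ (Sum.inr j) = 0)
    (hR6 : ∀ i : Fin (2 * q), (i : ℕ) ≠ 0 →
      Nat.card {j : Fin k // W i (Sum.inl j) = 1} = q - 1)
    (hR4 : ∀ i : Fin (2 * q), (i : ℕ) ≠ 0 → ∀ j : Fin k,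
      W i (Sum.inr j) = 1 - W i (Sum.inl j))
    (hR5 : ∀ i l : Fin (2 * q), (i : ℕ) ≠ 0 → (l : ℕ) ≠ 0 → i ≠ l →
      Nat.card {j : Fin k // W i (Sum.inl j) = 1 ∧ W l (Sum.inl j) = 1} = q / 2 - 1) :
    W.rank = 2 * q := by
  classical
  obtain ⟨m, hm⟩ := hqe
  have hm1 : 1 ≤ m := by omega
  have hq2 : 2 ≤ q := by omega
  have hkQ : (k : ℚ) = 2 * q - 1 := by
    subst hk
    rw [Nat.cast_sub (by omega)]
    push_cast; ring
  have hqQ : (2 : ℚ) ≤ (q : ℚ) := by exact_mod_cast hq2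
  have hkne : (k : ℚ) ≠ 0 := by rw [hkQ]; linarith
  have hqne : (q : ℚ) ≠ 0 := by positivity
  have hmQ : (m : ℚ) * 2 = (q : ℚ) := by
    have : ((m + m : ℕ) : ℚ) = (q : ℚ) := by rw [← hm]
    push_cast at this; linarith
  -- row sums
  have rowsum : ∀ i, ∑ j, W i j = (k : ℚ) := by
    intro i
    rw [Fintype.sum_sum_type]
    by_cases hi0 : (i : ℕ) = 0
    · have hieq : i = ⟨0, by omega⟩ := Fin.ext hi0
      have h1 : ∀ j : Fin k, W i (Sum.inl j) = 1 := fun j => by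
        rw [hieq]; exact (hR1 j).1
      have h2 : ∀ j : Fin k, W i (Sum.inr j) = 0 := fun j => by
        rw [hieq]; exact (hR1 j).2
      simp only [h1, h2, Finset.sum_const, Finset.sum_const_zero, Finset.card_univ,
        Fintype.card_fin, nsmul_eq_mul, mul_one, add_zero]
      ring
    · have hL : ∑ j, W i (Sum.inl j) = ((q - 1 : ℕ) : ℚ) := by
        rw [sum_eq_card_aux _ (fun j => h01 i (Sum.inl j)), hR6 i hi0]
      have hLQ : ∑ j, W i (Sum.inl j) = (q : ℚ) - 1 := by
        rw [hL, Nat.cast_sub (by omega)]; norm_num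
      have hR : ∑ j, W i (Sum.inr j) = ∑ j, (1 - W i (Sum.inl j)) :=
        Finset.sum_congr rfl fun j _ => hR4 i hi0 j
      rw [hLQ, hR, Finset.sum_sub_distrib, hLQ]
      simp only [Finset.sum_const, Finset.card_univ, Fintype.card_fin, nsmul_eq_mul, mul_one]
      ring
  -- inner products, diagonal
  have sq : ∀ i (j : Fin k ⊕ Fin k), W i j * W i j = W i j := by
    intro i j; rcases h01 i j with h | h <;> rw [h] <;> ring
  have inner_diag : ∀ i, ∑ j, W i j * W i j = (k : ℚ) := by
    intro i
    rw [Finset.sum_congr rfl (fun j _ => sq i j), rowsum]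
  -- inner products, off-diagonal
  have inner_off : ∀ i l, i ≠ l → ∑ j, W i j * W l j = (q : ℚ) - 1 := by
    intro i l hil
    rw [Fintype.sum_sum_type]
    by_cases hi0 : (i : ℕ) = 0
    · have hieq : i = ⟨0, by omega⟩ := Fin.ext hi0
      have hl0 : (l : ℕ) ≠ 0 := by
        intro h; exact hil (hieq.trans (Fin.ext h).symm)
      have hL : ∑ j, W i (Sum.inl j) * W l (Sum.inl j)
          = ∑ j, W l (Sum.inl j) := Finset.sum_congr rfl fun j _ => by
        rw [hieq, (hR1 j).1, one_mul]
      have hLc : ∑ j, W l (Sum.inl j) = (q : ℚ) - 1 := by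
        rw [sum_eq_card_aux _ (fun j => h01 l (Sum.inl j)), hR6 l hl0,
          Nat.cast_sub (by omega)]; norm_num
      have hRz : ∑ j, W i (Sum.inr j) * W l (Sum.inr j) = 0 :=
        Finset.sum_eq_zero fun j _ => by rw [hieq, (hR1 j).2, zero_mul]
      rw [hL, hLc, hRz, add_zero]
    · by_cases hl0 : (l : ℕ) = 0
      · have hleq : l = ⟨0, by omega⟩ := Fin.ext hl0
        have hL : ∑ j, W i (Sum.inl j) * W l (Sum.inl j)
            = ∑ j, W i (Sum.inl j) := Finset.sum_congr rfl fun j _ => by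
          rw [hleq, (hR1 j).1, mul_one]
        have hLc : ∑ j, W i (Sum.inl j) = (q : ℚ) - 1 := by
          rw [sum_eq_card_aux _ (fun j => h01 i (Sum.inl j)), hR6 i hi0,
            Nat.cast_sub (by omega)]; norm_num
        have hRz : ∑ j, W i (Sum.inr j) * W l (Sum.inr j) = 0 :=
          Finset.sum_eq_zero fun j _ => by rw [hleq, (hR1 j).2, mul_zero]
        rw [hL, hLc, hRz, add_zero]
      · -- both rows nonzero
        have hprod01 : ∀ j : Fin k, W i (Sum.inl j) * W l (Sum.inl j) = 0 ∨
            W i (Sum.inl j) * W l (Sum.inl j) = 1 := by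
          intro j
          rcases h01 i (Sum.inl j) with h | h <;> rcases h01 l (Sum.inl j) with h' | h' <;>
            simp [h, h']
        have hcardeq : Nat.card {j : Fin k // W i (Sum.inl j) * W l (Sum.inl j) = 1}
            = Nat.card {j : Fin k // W i (Sum.inl j) = 1 ∧ W l (Sum.inl j) = 1} := by
          apply Nat.card_congr
          apply Equiv.subtypeEquivRight
          intro j
          constructor
          · intro h
            rcases h01 i (Sum.inl j) with h1 | h1 <;> rcases h01 l (Sum.inl j) with h2 | h2 <;>
              simp [h1, h2] at h ⊢
          · rintro ⟨h1, h2⟩; rw [h1, h2, one_mul]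
        have hL : ∑ j, W i (Sum.inl j) * W l (Sum.inl j) = (m : ℚ) - 1 := by
          rw [sum_eq_card_aux _ hprod01, hcardeq, hR5 i l hi0 hl0 hil]
          have hq2m : q / 2 = m := by omega
          rw [hq2m, Nat.cast_sub (by omega)]; norm_num
        -- inr part
        have hiLc : ∑ j, W i (Sum.inl j) = (q : ℚ) - 1 := by
          rw [sum_eq_card_aux _ (fun j => h01 i (Sum.inl j)), hR6 i hi0,
            Nat.cast_sub (by omega)]; norm_num
        have hlLc : ∑ j, W l (Sum.inl j) = (q : ℚ) - 1 := by
          rw [sum_eq_card_aux _ (fun j => h01 l (Sum.inl j)), hR6 l hl0,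
            Nat.cast_sub (by omega)]; norm_num
        have hRr : ∑ j, W i (Sum.inr j) * W l (Sum.inr j)
            = ∑ j : Fin k, (1 - W i (Sum.inl j) - W l (Sum.inl j)
                + W i (Sum.inl j) * W l (Sum.inl j)) := by
          apply Finset.sum_congr rfl
          intro j _
          rw [hR4 i hi0 j, hR4 l hl0 j]; ring
        have hRc : ∑ j, W i (Sum.inr j) * W l (Sum.inr j)
            = (k : ℚ) - ((q : ℚ) - 1) - ((q : ℚ) - 1) + ((m : ℚ) - 1) := by
          rw [hRr]
          rw [Finset.sum_add_distrib, Finset.sum_sub_distrib, Finset.sum_sub_distrib,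
            hiLc, hlLc, hL]
          simp [Finset.card_univ]
        rw [hL, hRc, hkQ]
        linarith [hmQ]
  -- define right inverse
  set a : ℚ := 1 / (k : ℚ) with ha
  set b : ℚ := -((q : ℚ) - 1) / ((k : ℚ) * (q : ℚ)) with hb
  set T : Matrix (Fin k ⊕ Fin k) (Fin (2 * q)) ℚ :=
    fun j l => b + (a - b) * W l j with hT
  have hWT : W * T = 1 := by
    ext i l
    rw [Matrix.mul_apply]
    have expand : ∑ j, W i j * T j l
        = b * (∑ j, W i j) + (a - b) * ∑ j, W i j * W l j := by
      rw [Finset.mul_sum, Finset.mul_sum, ← Finset.sum_add_distrib]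
      apply Finset.sum_congr rfl
      intro j _
      simp only [hT]
      ring
    rw [expand, rowsum]
    have h2q1 : 2 * (q : ℚ) - 1 ≠ 0 := by linarith
    by_cases hil : i = l
    · subst hil
      rw [inner_diag, Matrix.one_apply_eq, ha, hb, hkQ]
      field_simp
      rw [mul_div_cancel_left₀ _ (by linarith : (q : ℚ) * 2 - 1 ≠ 0)]
      ring
    · rw [inner_off i l hil, Matrix.one_apply_ne hil, ha, hb, hkQ]
      field_simp
      ring
  -- conclude
  have h1 : (W * T).rank ≤ W.rank := Matrix.rank_mul_le_left W T
  rw [hWT, Matrix.rank_one] at h1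
  simp only [Fintype.card_fin] at h1
  have h2 : W.rank ≤ Fintype.card (Fin (2 * q)) := Matrix.rank_le_card_height W
  simp only [Fintype.card_fin] at h2
  omega
end

section
/- Let n ≥ 2, α a generator of 𝔽_{2ⁿ}^*, and H_j = {x : Tr(α^j x) = 0}. For any two distinct nonzero elements x, y ∈ 𝔽_{2ⁿ}, the number of indices j ∈ {0, …, 2ⁿ−2} such that both x ∈ H_j and y ∈ H_j equals 2^{n−2} − 1. -/
open Finset Polynomial

theorem stmt_13 (n : ℕ) (hn : 2 ≤ n)
    (Tr : GaloisField 2 n → GaloisField 2 n)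
    (hTr : ∀ β, Tr β = ∑ i ∈ Finset.range n, β ^ (2 ^ i))
    (α : GaloisField 2 n) (hα0 : α ≠ 0) (hαord : orderOf α = 2 ^ n - 1)
    (x y : GaloisField 2 n) (hx : x ≠ 0) (hy : y ≠ 0) (hxy : x ≠ y) :
    Nat.card {j : Fin (2 ^ n - 1) //
      Tr (α ^ (j : ℕ) * x) = 0 ∧ Tr (α ^ (j : ℕ) * y) = 0} = 2 ^ (n - 2) - 1 := by
  classical
  have hn0 : n ≠ 0 := by omega
  haveI : Fintype (GaloisField 2 n) := Fintype.ofFinite _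
  have hcard : Nat.card (GaloisField 2 n) = 2 ^ n := GaloisField.card 2 n hn0
  -- additivity of Tr
  have Tadd : ∀ a b : GaloisField 2 n, Tr (a + b) = Tr a + Tr b := by
    intro a b
    rw [hTr, hTr, hTr, ← Finset.sum_add_distrib]
    exact Finset.sum_congr rfl fun i _ => add_pow_char_pow ..
  have T0 : Tr 0 = 0 := by
    rw [hTr]
    exact Finset.sum_eq_zero fun i _ => zero_pow (by positivity)
  -- Tr takes values in {0, 1}
  have Tsq : ∀ β : GaloisField 2 n, Tr β ^ 2 = Tr β := by
    intro β
    have hβn : β ^ (2 ^ n) = β := by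
      have := FiniteField.pow_card β
      rwa [← Nat.card_eq_fintype_card, hcard] at this
    have h1 : Tr β ^ 2 = ∑ i ∈ Finset.range n, β ^ 2 ^ (i + 1) := by
      rw [hTr, sum_pow_char]
      exact Finset.sum_congr rfl fun i _ => by rw [← pow_mul, ← pow_succ]
    have h2 : ∑ i ∈ Finset.range (n + 1), β ^ 2 ^ i
        = (∑ i ∈ Finset.range n, β ^ 2 ^ (i + 1)) + β ^ 2 ^ 0 :=
      Finset.sum_range_succ' _ n
    have h3 : ∑ i ∈ Finset.range (n + 1), β ^ 2 ^ i
        = (∑ i ∈ Finset.range n, β ^ 2 ^ i) + β ^ 2 ^ n :=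
      Finset.sum_range_succ _ n
    rw [h1, hTr]
    have key : (∑ i ∈ Finset.range n, β ^ 2 ^ (i + 1)) + β
        = (∑ i ∈ Finset.range n, β ^ 2 ^ i) + β := by
      calc (∑ i ∈ Finset.range n, β ^ 2 ^ (i + 1)) + β
          = (∑ i ∈ Finset.range n, β ^ 2 ^ (i + 1)) + β ^ 2 ^ 0 := by rw [pow_zero, pow_one]
        _ = (∑ i ∈ Finset.range n, β ^ 2 ^ i) + β ^ 2 ^ n := by rw [← h2, h3]
        _ = (∑ i ∈ Finset.range n, β ^ 2 ^ i) + β := by rw [hβn]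
    exact add_right_cancel key
  have Tval : ∀ β : GaloisField 2 n, Tr β = 0 ∨ Tr β = 1 := by
    intro β
    have h := Tsq β
    have h' : Tr β * (Tr β - 1) = 0 := by rw [mul_sub, mul_one, ← sq, h, sub_self]
    rcases mul_eq_zero.mp h' with h'' | h''
    · exact Or.inl h''
    · exact Or.inr (by linear_combination h'')
  -- there is an element of trace 1
  have Tex : ∃ w : GaloisField 2 n, Tr w = 1 := by
    set P : (GaloisField 2 n)[X] := ∑ i ∈ Finset.range n, X ^ (2 ^ i) with hP
    have hPne : P ≠ 0 := by
      intro h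
      have hc : P.coeff (2 ^ (n - 1)) = 1 := by
        rw [hP, Polynomial.finset_sum_coeff]
        rw [Finset.sum_eq_single (n - 1)]
        · simp
        · intro i hi hne
          rw [Polynomial.coeff_X_pow, if_neg]
          exact fun h => hne (Nat.pow_right_injective le_rfl h.symm)
        · intro h; exact absurd (Finset.mem_range.mpr (by omega)) h
      rw [h, Polynomial.coeff_zero] at hc
      exact zero_ne_one hc
    have hdeg : P.natDegree < 2 ^ n := by
      have hle : P.natDegree ≤ 2 ^ (n - 1) := by
        apply Polynomial.natDegree_sum_le_of_forall_le
        intro i hi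
        rw [Polynomial.natDegree_X_pow]
        exact Nat.pow_le_pow_right (by norm_num) (by simp only [Finset.mem_range] at hi; omega)
      calc P.natDegree ≤ 2 ^ (n - 1) := hle
        _ < 2 ^ n := Nat.pow_lt_pow_right (by norm_num) (by omega)
    obtain ⟨w, hw⟩ := Polynomial.exists_eval_ne_zero_of_natDegree_lt_card P hPne
      (by
        rw [Cardinal.mk_fintype, ← Nat.card_eq_fintype_card, hcard]
        exact_mod_cast hdeg)
    have hev : P.eval w = Tr w := by
      rw [hP, hTr, Polynomial.eval_finset_sum]
      exact Finset.sum_congr rfl fun i _ => by rw [Polynomial.eval_pow, Polynomial.eval_X]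
    rw [hev] at hw
    rcases Tval w with h | h
    · exact absurd h hw
    · exact ⟨w, h⟩
  -- for every nonzero c there is z with Tr (z * c) = 1
  have Tex' : ∀ c : GaloisField 2 n, c ≠ 0 → ∃ z, Tr (z * c) = 1 := by
    intro c hc
    obtain ⟨w, hw⟩ := Tex
    exact ⟨w * c⁻¹, by rw [mul_assoc, inv_mul_cancel₀ hc, mul_one, hw]⟩
  have hxy0 : x + y ≠ 0 := fun h =>
    hxy ((eq_neg_of_add_eq_zero_left h).trans (CharTwo.neg_eq y))
  -- the three nonzero value pairs are attained
  obtain ⟨b, hb⟩ := Tex' (x + y) hxy0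
  obtain ⟨c, hc⟩ := Tex' x hx
  obtain ⟨d, hd⟩ := Tex' y hy
  have hsum : Tr (b * x) + Tr (b * y) = 1 := by rw [← Tadd, ← mul_add]; exact hb
  have hone : (1 : GaloisField 2 n) + 1 = 0 := CharTwo.add_self_eq_zero 1
  have key3 : (∃ z, Tr (z * x) = 1 ∧ Tr (z * y) = 0) ∧
      (∃ z, Tr (z * x) = 0 ∧ Tr (z * y) = 1) ∧
      (∃ z, Tr (z * x) = 1 ∧ Tr (z * y) = 1) := by
    rcases Tval (b * x) with hbx | hbx
    · have hby : Tr (b * y) = 1 := by rwa [hbx, zero_add] at hsum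
      rcases Tval (c * y) with hcy | hcy
      · exact ⟨⟨c, hc, hcy⟩, ⟨b, hbx, hby⟩,
          ⟨b + c, by rw [add_mul, Tadd, hbx, hc, zero_add],
            by rw [add_mul, Tadd, hby, hcy, add_zero]⟩⟩
      · exact ⟨⟨b + c, by rw [add_mul, Tadd, hbx, hc, zero_add],
            by rw [add_mul, Tadd, hby, hcy, hone]⟩, ⟨b, hbx, hby⟩, ⟨c, hc, hcy⟩⟩
    · have hby : Tr (b * y) = 0 := by
        rw [hbx] at hsum
        exact add_left_cancel (by rw [add_zero]; exact hsum)
      rcases Tval (d * x) with hdx | hdx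
      · exact ⟨⟨b, hbx, hby⟩, ⟨d, hdx, hd⟩,
          ⟨b + d, by rw [add_mul, Tadd, hbx, hdx, add_zero],
            by rw [add_mul, Tadd, hby, hd, zero_add]⟩⟩
      · exact ⟨⟨b, hbx, hby⟩,
          ⟨b + d, by rw [add_mul, Tadd, hbx, hdx, hone],
            by rw [add_mul, Tadd, hby, hd, zero_add]⟩, ⟨d, hdx, hd⟩⟩
  obtain ⟨⟨e10, h10x, h10y⟩, ⟨e01, h01x, h01y⟩, ⟨e11, h11x, h11y⟩⟩ := key3
  -- the homomorphism ψ and its range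
  let ψ : GaloisField 2 n →+ GaloisField 2 n × GaloisField 2 n :=
    { toFun := fun z => (Tr (z * x), Tr (z * y))
      map_zero' := by simp only [zero_mul, T0]; rfl
      map_add' := fun a b => by
        simp only [add_mul, Tadd, Prod.mk_add_mk] }
  have hψ : ∀ z, ψ z = (Tr (z * x), Tr (z * y)) := fun z => rfl
  have hrange : (ψ.range : Set (GaloisField 2 n × GaloisField 2 n)) =
      {((0 : GaloisField 2 n), (0 : GaloisField 2 n)), (0, 1), (1, 0), (1, 1)} := by
    ext ⟨s, t⟩
    simp only [SetLike.mem_coe, AddMonoidHom.mem_range, Set.mem_insert_iff,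
      Set.mem_singleton_iff, Prod.mk.injEq]
    constructor
    · rintro ⟨z, hz⟩
      rw [hψ z] at hz
      rw [Prod.mk.injEq] at hz
      obtain ⟨rfl, rfl⟩ := hz
      rcases Tval (z * x) with h1 | h1 <;> rcases Tval (z * y) with h2 | h2 <;> tauto
    · rintro (⟨rfl, rfl⟩ | ⟨rfl, rfl⟩ | ⟨rfl, rfl⟩ | ⟨rfl, rfl⟩)
      · exact ⟨0, by simp only [hψ, zero_mul, T0]⟩
      · exact ⟨e01, by rw [hψ, h01x, h01y]⟩
      · exact ⟨e10, by rw [hψ, h10x, h10y]⟩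
      · exact ⟨e11, by rw [hψ, h11x, h11y]⟩
  have hr4 : Nat.card ψ.range = 4 := by
    have e0 : Nat.card ψ.range = Nat.card (ψ.range : Set (GaloisField 2 n × GaloisField 2 n)) := rfl
    rw [e0, Nat.card_coe_set_eq, hrange]
    rw [Set.ncard_insert_of_notMem (by simp [Prod.ext_iff]),
      Set.ncard_insert_of_notMem (by simp [Prod.ext_iff]),
      Set.ncard_pair (by simp [Prod.ext_iff])]
  have hker : Nat.card ψ.ker = 2 ^ (n - 2) := by
    have h1 : Nat.card ψ.ker * 4 = 2 ^ n := by
      rw [← hr4, ← AddSubgroup.index_ker, AddSubgroup.card_mul_index, hcard]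
    have h2 : 2 ^ (n - 2) * 4 = 2 ^ n := by
      rw [show (4 : ℕ) = 2 ^ 2 from rfl, ← pow_add, Nat.sub_add_cancel hn]
    omega
  -- kernel gives the count of good z
  have hkcard : Nat.card {z : GaloisField 2 n // Tr (z * x) = 0 ∧ Tr (z * y) = 0}
      = 2 ^ (n - 2) := by
    rw [← hker]
    apply Nat.card_congr
    apply Equiv.subtypeEquivRight
    intro z
    rw [AddMonoidHom.mem_ker, hψ, Prod.mk_eq_zero]
  -- the powers of α enumerate the nonzero elements
  set u : (GaloisField 2 n)ˣ := Units.mk0 α hα0 with hu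
  have huv : (u : GaloisField 2 n) = α := rfl
  have huord : orderOf u = 2 ^ n - 1 := by rw [← orderOf_units, huv, hαord]
  have hcardU : Nat.card (GaloisField 2 n)ˣ = 2 ^ n - 1 := by
    rw [Nat.card_units, hcard]
  set g : Fin (2 ^ n - 1) → (GaloisField 2 n)ˣ := fun j => u ^ (j : ℕ) with hg
  have hgbij : Function.Bijective g := by
    rw [Nat.bijective_iff_injective_and_card]
    constructor
    · intro j k h
      refine Fin.ext (pow_injOn_Iio_orderOf ?_ ?_ h)
      · rw [Set.mem_Iio, huord]; exact j.isLt
      · rw [Set.mem_Iio, huord]; exact k.isLt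
    · rw [hcardU, Nat.card_eq_fintype_card, Fintype.card_fin]
  have hgv : ∀ j : Fin (2 ^ n - 1),
      ((g j : (GaloisField 2 n)ˣ) : GaloisField 2 n) = α ^ (j : ℕ) := by
    intro j
    rw [hg, ← huv, Units.val_pow_eq_pow_val]
  have e1 : {j : Fin (2 ^ n - 1) // Tr (α ^ (j : ℕ) * x) = 0 ∧ Tr (α ^ (j : ℕ) * y) = 0}
      ≃ {v : (GaloisField 2 n)ˣ //
          Tr ((v : GaloisField 2 n) * x) = 0 ∧ Tr ((v : GaloisField 2 n) * y) = 0} :=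
    (Equiv.ofBijective g hgbij).subtypeEquiv (fun j => by
      rw [Equiv.ofBijective_apply, hgv j])
  have e2 : {v : (GaloisField 2 n)ˣ //
          Tr ((v : GaloisField 2 n) * x) = 0 ∧ Tr ((v : GaloisField 2 n) * y) = 0}
      ≃ {w : {a : GaloisField 2 n // a ≠ 0} //
          Tr ((w : GaloisField 2 n) * x) = 0 ∧ Tr ((w : GaloisField 2 n) * y) = 0} :=
    unitsEquivNeZero.subtypeEquiv (fun v => Iff.rfl)
  have e3 : {w : {a : GaloisField 2 n // a ≠ 0} //
          Tr ((w : GaloisField 2 n) * x) = 0 ∧ Tr ((w : GaloisField 2 n) * y) = 0}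
      ≃ {a : GaloisField 2 n // a ≠ 0 ∧ (Tr (a * x) = 0 ∧ Tr (a * y) = 0)} :=
    Equiv.subtypeSubtypeEquivSubtypeInter (fun a : GaloisField 2 n => a ≠ 0)
      (fun a => Tr (a * x) = 0 ∧ Tr (a * y) = 0)
  have hmain : Nat.card {j : Fin (2 ^ n - 1) //
      Tr (α ^ (j : ℕ) * x) = 0 ∧ Tr (α ^ (j : ℕ) * y) = 0}
      = Nat.card {a : GaloisField 2 n // a ≠ 0 ∧ (Tr (a * x) = 0 ∧ Tr (a * y) = 0)} :=
    Nat.card_congr (e1.trans (e2.trans e3))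
  rw [hmain, Nat.card_eq_fintype_card, Fintype.card_subtype]
  have hfeq : (Finset.univ.filter fun a : GaloisField 2 n =>
        a ≠ 0 ∧ (Tr (a * x) = 0 ∧ Tr (a * y) = 0))
      = (Finset.univ.filter fun a : GaloisField 2 n =>
        Tr (a * x) = 0 ∧ Tr (a * y) = 0).erase 0 := by
    ext a
    simp only [Finset.mem_filter, Finset.mem_erase, Finset.mem_univ, true_and]
  have hfc : (Finset.univ.filter fun a : GaloisField 2 n =>
      Tr (a * x) = 0 ∧ Tr (a * y) = 0).card = 2 ^ (n - 2) := by
    rw [← Fintype.card_subtype, ← Nat.card_eq_fintype_card]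
    exact hkcard
  rw [hfeq, Finset.card_erase_of_mem, hfc]
  simp only [Finset.mem_filter, Finset.mem_univ, true_and, zero_mul, T0, and_self]
end
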